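/- Let g : [0,T]×[0,T]×ℝ^n×ℝ^n×ℝ^m×ℝ^{m×d} → ℝ^m be bounded by L and Lipschitz in all its arguments with constant L, and let σ : [0,T]×ℝ^n → ℝ^{n×d} be bounded by L and Lipschitz in (s,x) with constant L. Then there is a constant K, depending only on L, T and α, such that for every S ∈ [0,T), every θ ∈ X[S,T] and every (t,ξ) ∈ [0,T]×ℝ^n, the function g^θ(τ,η) := g(t,τ,ξ,η, θ(τ,τ,η,η), θ_η(t,τ,ξ,η)σ(τ,η)), defined for (τ,η) ∈ [max(t,S),T]×ℝ^n (with θ_η the derivative of θ in its last variable), satisfies |g^θ|^{(α)}_{[max(t,S),T]×ℝ^n} ≤ K (1 + ‖θ‖_{X[S,T]}). -/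

import Mathlib

open scoped ENNReal NNReal BigOperators
open Set

noncomputable section

abbrev En (n : ℕ) : Type := EuclideanSpace ℝ (Fin n)

def sing (n : ℕ) (i : Fin n) : En n := EuclideanSpace.single i (1 : ℝ)

variable {n m : ℕ}

/-- sup norm `|φ|⁽⁰⁾` over `[S,T] × ℝⁿ`. -/
def nrm0 {V : Type*} [NormedAddCommGroup V] (S T : ℝ) (φ : ℝ → En n → V) : ℝ≥0∞ :=
  ⨆ (s : Icc S T) (x : En n), (‖φ s.1 x‖₊ : ℝ≥0∞)

/-- time Hölder seminorm `⟨φ⟩ₛ^(β)` over `[S,T] × ℝⁿ`. -/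
def hS {V : Type*} [NormedAddCommGroup V] (S T β : ℝ) (φ : ℝ → En n → V) : ℝ≥0∞ :=
  ⨆ (s : Icc S T) (s' : Icc S T) (x : En n),
    (‖φ s.1 x - φ s'.1 x‖₊ : ℝ≥0∞) / ENNReal.ofReal (|s.1 - s'.1| ^ β)

/-- space Hölder seminorm `⟨φ⟩ₓ^(α)` over `[S,T] × ℝⁿ`. -/
def hX {V : Type*} [NormedAddCommGroup V] (S T α : ℝ) (φ : ℝ → En n → V) : ℝ≥0∞ :=
  ⨆ (s : Icc S T) (x : En n) (x' : En n) (_ : dist x x' ≤ 1),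
    (‖φ s.1 x - φ s.1 x'‖₊ : ℝ≥0∞) / ENNReal.ofReal (dist x x' ^ α)

/-- `⟨φ⟩^(α) = ⟨φ⟩ₛ^(α/2) + ⟨φ⟩ₓ^(α)`. -/
def hol {V : Type*} [NormedAddCommGroup V] (S T α : ℝ) (φ : ℝ → En n → V) : ℝ≥0∞ :=
  hS S T (α/2) φ + hX S T α φ

/-- `|φ|^(α)`. -/
def nrmA {V : Type*} [NormedAddCommGroup V] (S T α : ℝ) (φ : ℝ → En n → V) : ℝ≥0∞ :=
  nrm0 S T φ + hol S T α φ

/-- spatial gradient. -/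
def Dx {V : Type*} [NormedAddCommGroup V] [NormedSpace ℝ V] (φ : ℝ → En n → V) :
    ℝ → En n → (En n →L[ℝ] V) := fun s x => fderiv ℝ (φ s) x

/-- spatial Hessian. -/
def Dxx {V : Type*} [NormedAddCommGroup V] [NormedSpace ℝ V] (φ : ℝ → En n → V) :
    ℝ → En n → (En n →L[ℝ] (En n →L[ℝ] V)) :=
  fun s x => fderiv ℝ (fun y => fderiv ℝ (φ s) y) x

/-- time derivative. -/
def Dt {V : Type*} [NormedAddCommGroup V] [NormedSpace ℝ V] (φ : ℝ → En n → V) :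
    ℝ → En n → V := fun s x => deriv (fun r => φ r x) s

/-- `|φ|^(1+α)`. -/
def nrm1A {V : Type*} [NormedAddCommGroup V] [NormedSpace ℝ V] (S T α : ℝ)
    (φ : ℝ → En n → V) : ℝ≥0∞ :=
  nrm0 S T φ + nrm0 S T (Dx φ) + hol S T α (Dx φ) + hS S T ((1+α)/2) φ

/-- `|φ|^(2+α)`. -/
def nrm2A {V : Type*} [NormedAddCommGroup V] [NormedSpace ℝ V] (S T α : ℝ)
    (φ : ℝ → En n → V) : ℝ≥0∞ :=
  nrm0 S T φ + nrm0 S T (Dx φ) + nrm0 S T (Dt φ) + nrm0 S T (Dxx φ)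
    + hol S T α (Dt φ) + hol S T α (Dxx φ) + hS S T ((1+α)/2) (Dx φ)

/-- sup norm over `ℝⁿ` (time–independent functions). -/
def xnrm0 {V : Type*} [NormedAddCommGroup V] (h : En n → V) : ℝ≥0∞ :=
  ⨆ x : En n, (‖h x‖₊ : ℝ≥0∞)

/-- Hölder seminorm over `ℝⁿ`. -/
def xhol {V : Type*} [NormedAddCommGroup V] (α : ℝ) (h : En n → V) : ℝ≥0∞ :=
  ⨆ (x : En n) (x' : En n) (_ : dist x x' ≤ 1),
    (‖h x - h x'‖₊ : ℝ≥0∞) / ENNReal.ofReal (dist x x' ^ α)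

/-- `|h|^(1+α)` on `ℝⁿ`. -/
def xnrm1A {V : Type*} [NormedAddCommGroup V] [NormedSpace ℝ V] (α : ℝ)
    (h : En n → V) : ℝ≥0∞ :=
  xnrm0 h + xnrm0 (fderiv ℝ h) + xhol α (fderiv ℝ h)

/-- `|h|^(2+α)` on `ℝⁿ`. -/
def xnrm2A {V : Type*} [NormedAddCommGroup V] [NormedSpace ℝ V] (α : ℝ)
    (h : En n → V) : ℝ≥0∞ :=
  xnrm0 h + xnrm0 (fderiv ℝ h) + xnrm0 (fderiv ℝ (fderiv ℝ h))
    + xhol α (fderiv ℝ (fderiv ℝ h))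

/-- uniform parabolicity (P1). -/
def P1 (n : ℕ) (T lam0 : ℝ) (a : ℝ → En n → Fin n → Fin n → ℝ) : Prop :=
  ∀ s ∈ Icc (0:ℝ) T, ∀ x ζ : En n,
    lam0 * ‖ζ‖^2 ≤ ∑ i, ∑ j, a s x i j * ζ i * ζ j

/-- regularity of the coefficients (P2). -/
def P2 (n : ℕ) (T α K0 : ℝ) (a : ℝ → En n → Fin n → Fin n → ℝ)
    (b : ℝ → En n → Fin n → ℝ) : Prop :=
  (∀ i j, ContinuousOn (fun p : ℝ × En n => a p.1 p.2 i j) (Icc 0 T ×ˢ univ)) ∧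
  (∀ i, ContinuousOn (fun p : ℝ × En n => b p.1 p.2 i) (Icc 0 T ×ˢ univ)) ∧
  (∃ C : ℝ, ∀ s ∈ Icc (0:ℝ) T, ∀ x : En n,
      (∀ i j, |a s x i j| ≤ C) ∧ (∀ i, |b s x i| ≤ C)) ∧
  (∀ i j, ∀ s ∈ Icc (0:ℝ) T, ∀ s' ∈ Icc (0:ℝ) T, ∀ x x' : En n,
      |a s x i j - a s' x' i j| ≤ K0 * (|s - s'| ^ (α/2) + ‖x - x'‖ ^ α)) ∧
  (∀ i, ∀ s ∈ Icc (0:ℝ) T, ∀ x x' : En n,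
      |b s x i - b s x' i| ≤ K0 * ‖x - x'‖ ^ α)

/-- bounded classical solution of the backward Cauchy problem (★) on `[S,T] × ℝⁿ`. -/
def IsClassicalSol (n : ℕ) (S T : ℝ) (a : ℝ → En n → Fin n → Fin n → ℝ)
    (b : ℝ → En n → Fin n → ℝ) (f : ℝ → En n → ℝ) (h : En n → ℝ)
    (v : ℝ → En n → ℝ) : Prop :=
  (∃ C : ℝ, ∀ s ∈ Icc S T, ∀ x : En n, |v s x| ≤ C) ∧
  ContinuousOn (fun p : ℝ × En n => v p.1 p.2) (Icc S T ×ˢ univ) ∧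
  (∀ x : En n, ∀ s ∈ Icc S T, DifferentiableAt ℝ (fun r => v r x) s) ∧
  (∀ s ∈ Icc S T, ContDiff ℝ 2 (v s)) ∧
  (∀ s ∈ Icc S T, ∀ x : En n,
    Dt v s x + (∑ i, ∑ j, a s x i j * Dxx v s x (sing n i) (sing n j))
      + (∑ i, b s x i * Dx v s x (sing n i)) + f s x = 0) ∧
  (∀ x : En n, v T x = h x)


/-- the `X[S,T]`-norm of `θ : Δ̂[S,T] × ℝⁿ × ℝⁿ → ℝᵐ`;  all inner norms are taken
over `[max(t,S),T] × ℝⁿ`. -/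
def Xnrm (n m : ℕ) (S T α : ℝ) (θ : ℝ → ℝ → En n → En n → En m) : ℝ≥0∞ :=
  ⨆ (t : Icc (0:ℝ) T) (ξ : En n),
    (nrm1A (max t.1 S) T α (fun s x => θ t.1 s ξ x)
      + nrm0 (max t.1 S) T (fun s x => deriv (fun r => θ r s ξ x) t.1)
      + nrm0 (max t.1 S) T (fun s x => fderiv ℝ (fun ξ' => θ t.1 s ξ' x) ξ)
      + nrm0 (max t.1 S) T
          (fun s x => deriv (fun r => fderiv ℝ (fun y => θ r s ξ y) x) t.1)
      + nrm0 (max t.1 S) T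
          (fun s x => fderiv ℝ (fun ξ' => fderiv ℝ (fun y => θ t.1 s ξ' y) x) ξ))

/-- membership in the Banach space `X[S,T]`. -/
def memX (n m : ℕ) (S T α : ℝ) (θ : ℝ → ℝ → En n → En n → En m) : Prop :=
  (∀ t ∈ Icc (0:ℝ) T, ∀ s ∈ Icc (max t S) T, ∀ ξ x : En n,
    DifferentiableAt ℝ (fun y => θ t s ξ y) x ∧
    DifferentiableAt ℝ (fun r => θ r s ξ x) t ∧
    DifferentiableAt ℝ (fun ξ' => θ t s ξ' x) ξ ∧
    DifferentiableAt ℝ (fun r => fderiv ℝ (fun y => θ r s ξ y) x) t ∧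
    DifferentiableAt ℝ (fun ξ' => fderiv ℝ (fun y => θ t s ξ' y) x) ξ) ∧
  Xnrm n m S T α θ ≠ ⊤

section AuxLemmas

variable {V : Type*} [NormedAddCommGroup V]

lemma nrm0_le_pt {S T : ℝ} (φ : ℝ → En n → V) {s : ℝ} (hs : s ∈ Icc S T) (x : En n) :
    (‖φ s x‖₊ : ℝ≥0∞) ≤ nrm0 S T φ := by
  refine le_iSup_of_le (⟨s, hs⟩ : Icc S T) ?_
  exact le_iSup (fun x : En n => (‖φ s x‖₊ : ℝ≥0∞)) x

lemma hS_le_pt {S T β : ℝ} (φ : ℝ → En n → V) {s s' : ℝ} (hs : s ∈ Icc S T)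
    (hs' : s' ∈ Icc S T) (x : En n) :
    (‖φ s x - φ s' x‖₊ : ℝ≥0∞) / ENNReal.ofReal (|s - s'| ^ β) ≤ hS S T β φ := by
  refine le_iSup_of_le (⟨s, hs⟩ : Icc S T) ?_
  refine le_iSup_of_le (⟨s', hs'⟩ : Icc S T) ?_
  exact le_iSup (fun x : En n =>
    (‖φ s x - φ s' x‖₊ : ℝ≥0∞) / ENNReal.ofReal (|s - s'| ^ β)) x

lemma hX_le_pt {S T α : ℝ} (φ : ℝ → En n → V) {s : ℝ} (hs : s ∈ Icc S T) {x x' : En n}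
    (h : dist x x' ≤ 1) :
    (‖φ s x - φ s x'‖₊ : ℝ≥0∞) / ENNReal.ofReal (dist x x' ^ α) ≤ hX S T α φ := by
  refine le_iSup_of_le (⟨s, hs⟩ : Icc S T) ?_
  refine le_iSup_of_le x ?_
  refine le_iSup_of_le x' ?_
  exact le_iSup_of_le h le_rfl

lemma coe_le_toReal {a : ℝ≥0} {b : ℝ≥0∞} (hb : b ≠ ⊤) (h : (a : ℝ≥0∞) ≤ b) :
    (a : ℝ) ≤ b.toReal := by
  simpa using ENNReal.toReal_mono hb h

lemma ediv_extract {v : V} {d : ℝ} (hd : 0 < d) {b : ℝ≥0∞} (hb : b ≠ ⊤)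
    (h : (‖v‖₊ : ℝ≥0∞) / ENNReal.ofReal d ≤ b) : ‖v‖ ≤ b.toReal * d := by
  rw [ENNReal.div_le_iff (ENNReal.ofReal_pos.2 hd).ne' ENNReal.ofReal_ne_top] at h
  have h2 := ENNReal.toReal_mono (ENNReal.mul_ne_top hb ENNReal.ofReal_ne_top) h
  simpa [ENNReal.toReal_mul, ENNReal.toReal_ofReal hd.le] using h2

lemma quot_goal {v : V} {C d : ℝ} (hd : 0 < d) (h : ‖v‖ ≤ C * d) :
    (‖v‖₊ : ℝ≥0∞) / ENNReal.ofReal d ≤ ENNReal.ofReal C := by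
  have hC : (0:ℝ) ≤ C := by nlinarith [norm_nonneg v]
  rw [ENNReal.div_le_iff (ENNReal.ofReal_pos.2 hd).ne' ENNReal.ofReal_ne_top,
    ← ENNReal.ofReal_mul hC, ← enorm_eq_nnnorm, ← ofReal_norm]
  exact ENNReal.ofReal_le_ofReal h

lemma holder_aux {r M c e : ℝ} (hr : 0 ≤ r) (hrM : r ≤ M) (hM : 1 ≤ M) (hce : c ≤ e)
    (he1 : e - c ≤ 1) (he0 : e ≠ 0) : r ^ e ≤ M * r ^ c := by
  have hsum : c + (e - c) = e := by ring
  have h1 : r ^ e = r ^ c * r ^ (e - c) := by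
    rw [← Real.rpow_add' hr (by rw [hsum]; exact he0), hsum]
  have h2 : r ^ (e - c) ≤ M := by
    calc r ^ (e - c) ≤ M ^ (e - c) := Real.rpow_le_rpow hr hrM (by linarith)
    _ ≤ M ^ (1:ℝ) := Real.rpow_le_rpow_of_exponent_le hM he1
    _ = M := Real.rpow_one M
  calc r ^ e = r ^ c * r ^ (e - c) := h1
  _ ≤ r ^ c * M := mul_le_mul_of_nonneg_left h2 (Real.rpow_nonneg hr c)
  _ = M * r ^ c := mul_comm _ _

variable {W : Type*} [NormedAddCommGroup W] [NormedSpace ℝ W]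
variable {E : Type*} [NormedAddCommGroup E] [NormedSpace ℝ E]

lemma mvt_time {f : ℝ → W} {a b C : ℝ} (hab : a ≤ b)
    (hf : ∀ r ∈ Icc a b, DifferentiableAt ℝ f r)
    (hC : ∀ r ∈ Icc a b, ‖deriv f r‖ ≤ C) : ‖f b - f a‖ ≤ C * (b - a) :=
  norm_image_sub_le_of_norm_deriv_le_segment'
    (fun r hr => ((hf r hr).hasDerivAt).hasDerivWithinAt)
    (fun r hr => hC r (Ico_subset_Icc_self hr)) b (right_mem_Icc.2 hab)

lemma mvt_space {f : E → W} {C : ℝ} (hf : ∀ x, DifferentiableAt ℝ f x)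
    (hC : ∀ x, ‖fderiv ℝ f x‖ ≤ C) (x y : E) : ‖f y - f x‖ ≤ C * ‖y - x‖ :=
  convex_univ.norm_image_sub_le_of_norm_fderiv_le (fun z _ => hf z) (fun z _ => hC z)
    (mem_univ x) (mem_univ y)

lemma le5₁ {a b c d e : ℝ≥0∞} : a ≤ a + b + c + d + e :=
  le_self_add.trans (le_self_add.trans (le_self_add.trans le_self_add))

lemma le5₂ {a b c d e : ℝ≥0∞} : b ≤ a + b + c + d + e :=
  le_add_self.trans (le_self_add.trans (le_self_add.trans le_self_add))

lemma le5₃ {a b c d e : ℝ≥0∞} : c ≤ a + b + c + d + e :=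
  le_add_self.trans (le_self_add.trans le_self_add)

lemma le4₂ {a b c d : ℝ≥0∞} : b ≤ a + b + c + d :=
  le_add_self.trans (le_self_add.trans le_self_add)

lemma le4₃ {a b c d : ℝ≥0∞} : c ≤ a + b + c + d :=
  le_add_self.trans le_self_add

lemma le4₄ {a b c d : ℝ≥0∞} : d ≤ a + b + c + d := le_add_self

end AuxLemmas

set_option maxHeartbeats 2000000 in
/-- Hölder bound for the composed generator `g^θ`. -/
theorem stmt_6 (n m d : ℕ) (hn : 1 ≤ n) (hm : 1 ≤ m) (hd : 1 ≤ d)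
    (α T L : ℝ) (hα : 0 < α) (hα1 : α < 1) (hT : 0 < T) (hL : 0 < L) :
    ∃ K : ℝ≥0,
      ∀ (g : ℝ → ℝ → En n → En n → En m → (En d →L[ℝ] En m) → En m)
        (σ : ℝ → En n → (En d →L[ℝ] En n)),
        (∀ (t s : ℝ) (ξ x : En n) (y : En m) (z : En d →L[ℝ] En m),
          ‖g t s ξ x y z‖ ≤ L) →
        (∀ (t t' s s' : ℝ) (ξ ξ' x x' : En n) (y y' : En m)
            (z z' : En d →L[ℝ] En m),
          ‖g t s ξ x y z - g t' s' ξ' x' y' z'‖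
            ≤ L * (|t - t'| + |s - s'| + ‖ξ - ξ'‖ + ‖x - x'‖ + ‖y - y'‖ + ‖z - z'‖)) →
        (∀ (s : ℝ) (x : En n), ‖σ s x‖ ≤ L) →
        (∀ (s s' : ℝ) (x x' : En n), ‖σ s x - σ s' x'‖ ≤ L * (|s - s'| + ‖x - x'‖)) →
        ∀ S : ℝ, 0 ≤ S → S < T →
        ∀ θ : ℝ → ℝ → En n → En n → En m, memX n m S T α θ →
        ∀ t ∈ Icc (0:ℝ) T, ∀ ξ : En n,
          nrmA (max t S) T α
            (fun τ η => g t τ ξ η (θ τ τ η η)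
              ((fderiv ℝ (fun y => θ t τ ξ y) η).comp (σ τ η)))
            ≤ (K : ℝ≥0∞) * (1 + Xnrm n m S T α θ) := by
  classical
  set M : ℝ := max 1 T with hMdef
  have hM1 : 1 ≤ M := le_max_left 1 T
  have hM0 : 0 ≤ M := by linarith
  refine ⟨(L + L * M * (3 + 2*L) + L * (3 + 2*L)).toNNReal, ?_⟩
  intro g σ hgB hgL hσB hσL S hS0 hST θ hθ t ht ξ
  obtain ⟨hmem, hN⟩ := hθ
  set XN := Xnrm n m S T α θ with hXNdef
  set N := XN.toReal with hNdef
  have hN0 : 0 ≤ N := ENNReal.toReal_nonneg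
  -- extract the three components of the X-norm that we need
  have hcomp : ∀ t', t' ∈ Icc (0:ℝ) T → ∀ ξ' : En n,
      nrm1A (max t' S) T α (fun s x => θ t' s ξ' x) ≤ XN ∧
      nrm0 (max t' S) T (fun s x => deriv (fun r => θ r s ξ' x) t') ≤ XN ∧
      nrm0 (max t' S) T (fun s x => fderiv ℝ (fun ζ => θ t' s ζ x) ξ') ≤ XN := by
    intro t' ht' ξ'
    have h := le_iSup₂ (f := fun (tt : Icc (0:ℝ) T) (ζ : En n) =>
      nrm1A (max tt.1 S) T α (fun s x => θ tt.1 s ζ x)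
      + nrm0 (max tt.1 S) T (fun s x => deriv (fun r => θ r s ζ x) tt.1)
      + nrm0 (max tt.1 S) T (fun s x => fderiv ℝ (fun ξ'' => θ tt.1 s ξ'' x) ζ)
      + nrm0 (max tt.1 S) T (fun s x => deriv (fun r => fderiv ℝ (fun y => θ r s ζ y) x) tt.1)
      + nrm0 (max tt.1 S) T
          (fun s x => fderiv ℝ (fun ξ'' => fderiv ℝ (fun y => θ tt.1 s ξ'' y) x) ζ))
      (⟨t', ht'⟩ : Icc (0:ℝ) T) ξ'
    exact ⟨le5₁.trans h, le5₂.trans h, le5₃.trans h⟩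
  -- pointwise bounds extracted from the X-norm
  have F1 : ∀ t', t' ∈ Icc (0:ℝ) T → ∀ (ξ' : En n) (s : ℝ), s ∈ Icc (max t' S) T →
      ∀ x : En n, ‖fderiv ℝ (fun y => θ t' s ξ' y) x‖ ≤ N := by
    intro t' ht' ξ' s hs x
    have h1 : nrm0 (max t' S) T (Dx (fun s x => θ t' s ξ' x)) ≤ XN :=
      le4₂.trans (hcomp t' ht' ξ').1
    exact coe_le_toReal hN ((nrm0_le_pt _ hs x).trans h1)
  have F2 : ∀ t', t' ∈ Icc (0:ℝ) T → ∀ (ξ' : En n) (s s' : ℝ), s ∈ Icc (max t' S) T →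
      s' ∈ Icc (max t' S) T → ∀ x : En n,
      ‖θ t' s ξ' x - θ t' s' ξ' x‖ ≤ N * |s - s'| ^ ((1+α)/2) := by
    intro t' ht' ξ' s s' hs hs' x
    rcases eq_or_ne s s' with rfl | hne
    · simp only [sub_self, norm_zero]
      exact mul_nonneg hN0 (Real.rpow_nonneg (abs_nonneg _) _)
    · have h1 : hS (max t' S) T ((1+α)/2) (fun s x => θ t' s ξ' x) ≤ XN :=
        le4₄.trans (hcomp t' ht' ξ').1
      have hd : 0 < |s - s'| ^ ((1+α)/2) :=
        Real.rpow_pos_of_pos (abs_pos.2 (sub_ne_zero.2 hne)) _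
      exact ediv_extract hd hN ((hS_le_pt _ hs hs' x).trans h1)
  have F3 : ∀ t', t' ∈ Icc (0:ℝ) T → ∀ (ξ' : En n) (s s' : ℝ), s ∈ Icc (max t' S) T →
      s' ∈ Icc (max t' S) T → ∀ x : En n,
      ‖fderiv ℝ (fun y => θ t' s ξ' y) x - fderiv ℝ (fun y => θ t' s' ξ' y) x‖
        ≤ N * |s - s'| ^ (α/2) := by
    intro t' ht' ξ' s s' hs hs' x
    rcases eq_or_ne s s' with rfl | hne
    · simp only [sub_self, norm_zero]
      exact mul_nonneg hN0 (Real.rpow_nonneg (abs_nonneg _) _)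
    · have h1 : hS (max t' S) T (α/2) (Dx (fun s x => θ t' s ξ' x)) ≤ XN :=
        (le_self_add.trans le4₃).trans (hcomp t' ht' ξ').1
      have hd : 0 < |s - s'| ^ (α/2) :=
        Real.rpow_pos_of_pos (abs_pos.2 (sub_ne_zero.2 hne)) _
      exact ediv_extract hd hN ((hS_le_pt _ hs hs' x).trans h1)
  have F4 : ∀ t', t' ∈ Icc (0:ℝ) T → ∀ (ξ' : En n) (s : ℝ), s ∈ Icc (max t' S) T →
      ∀ x x' : En n, dist x x' ≤ 1 →
      ‖fderiv ℝ (fun y => θ t' s ξ' y) x - fderiv ℝ (fun y => θ t' s ξ' y) x'‖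
        ≤ N * dist x x' ^ α := by
    intro t' ht' ξ' s hs x x' hd1
    rcases eq_or_ne x x' with rfl | hne
    · simp only [sub_self, norm_zero]
      exact mul_nonneg hN0 (Real.rpow_nonneg dist_nonneg _)
    · have h1 : hX (max t' S) T α (Dx (fun s x => θ t' s ξ' x)) ≤ XN :=
        (le_add_self.trans le4₃).trans (hcomp t' ht' ξ').1
      have hd : 0 < dist x x' ^ α := Real.rpow_pos_of_pos (dist_pos.2 hne) _
      exact ediv_extract hd hN ((hX_le_pt _ hs hd1).trans h1)
  have F5 : ∀ t', t' ∈ Icc (0:ℝ) T → ∀ (ξ' : En n) (s : ℝ), s ∈ Icc (max t' S) T →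
      ∀ x : En n, ‖deriv (fun r => θ r s ξ' x) t'‖ ≤ N := by
    intro t' ht' ξ' s hs x
    exact coe_le_toReal hN ((nrm0_le_pt _ hs x).trans (hcomp t' ht' ξ').2.1)
  have F6 : ∀ t', t' ∈ Icc (0:ℝ) T → ∀ (ξ' : En n) (s : ℝ), s ∈ Icc (max t' S) T →
      ∀ x : En n, ‖fderiv ℝ (fun ζ => θ t' s ζ x) ξ'‖ ≤ N := by
    intro t' ht' ξ' s hs x
    exact coe_le_toReal hN ((nrm0_le_pt _ hs x).trans (hcomp t' ht' ξ').2.2)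
  -- the composed function
  set Gg : ℝ → En n → En m := fun τ η => g t τ ξ η (θ τ τ η η)
      ((fderiv ℝ (fun y => θ t τ ξ y) η).comp (σ τ η)) with hGg
  -- sup-norm bound
  have hB0 : nrm0 (max t S) T Gg ≤ ENNReal.ofReal L := by
    refine iSup_le fun τ => iSup_le fun η => ?_
    rw [← enorm_eq_nnnorm, ← ofReal_norm]
    exact ENNReal.ofReal_le_ofReal (hgB _ _ _ _ _ _)
  -- key time-Hölder estimate
  have key1 : ∀ τ τ' : ℝ, τ ∈ Icc (max t S) T → τ' ∈ Icc (max t S) T → τ ≤ τ' →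
      ∀ η : En n,
      ‖Gg τ η - Gg τ' η‖ ≤ L * M * (3 + 2*L) * (1 + N) * (|τ - τ'| ^ (α/2)) := by
    intro τ τ' hτ hτ' hle η
    have hSτ : S ≤ τ := le_trans (le_max_right t S) hτ.1
    have hτ0 : 0 ≤ τ := hS0.trans hSτ
    have hτ'T : τ' ≤ T := hτ'.2
    have hSτ' : S ≤ τ' := hSτ.trans hle
    set Δ : ℝ := τ' - τ with hΔdef
    have hΔ0 : 0 ≤ Δ := by simp only [hΔdef]; linarith
    have habs : |τ - τ'| = Δ := by rw [abs_sub_comm]; exact abs_of_nonneg hΔ0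
    rw [habs]
    have hΔM : Δ ≤ M := by
      have h1 : Δ ≤ T := by simp only [hΔdef]; linarith
      exact h1.trans (le_max_right 1 T)
    set dpow : ℝ := Δ ^ (α/2) with hdpow
    have hd0 : 0 ≤ dpow := Real.rpow_nonneg hΔ0 _
    have hi : Δ ≤ M * dpow := by
      have h := holder_aux (c := α/2) (e := 1) hΔ0 hΔM hM1 (by linarith) (by linarith)
        one_ne_zero
      simpa [Real.rpow_one] using h
    have hhalf : Δ ^ ((1+α)/2) ≤ M * dpow :=
      holder_aux hΔ0 hΔM hM1 (by linarith) (by linarith) (by positivity)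
    -- the y-difference
    have hy1 : ‖θ τ τ η η - θ τ τ' η η‖ ≤ N * Δ ^ ((1+α)/2) := by
      have h := F2 τ ⟨hτ0, hτ.2⟩ η τ τ' ⟨max_le le_rfl hSτ, hτ.2⟩
        ⟨max_le hle hSτ', hτ'T⟩ η
      rwa [habs] at h
    have hy2 : ‖θ τ τ' η η - θ τ' τ' η η‖ ≤ N * Δ := by
      have hm := mvt_time (f := fun r => θ r τ' η η) hle
        (fun r hr => (hmem r ⟨hτ0.trans hr.1, hr.2.trans hτ'T⟩ τ'
          ⟨max_le hr.2 hSτ', hτ'T⟩ η η).2.1)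
        (fun r hr => F5 r ⟨hτ0.trans hr.1, hr.2.trans hτ'T⟩ η τ'
          ⟨max_le hr.2 hSτ', hτ'T⟩ η)
      rw [norm_sub_rev]
      exact hm
    have hyd : ‖θ τ τ η η - θ τ' τ' η η‖ ≤ 2 * (N * (M * dpow)) := by
      have h3 : θ τ τ η η - θ τ' τ' η η
          = (θ τ τ η η - θ τ τ' η η) + (θ τ τ' η η - θ τ' τ' η η) := by abel
      rw [h3]
      refine (norm_add_le _ _).trans ?_
      have e1 : N * Δ ^ ((1+α)/2) ≤ N * (M * dpow) := mul_le_mul_of_nonneg_left hhalf hN0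
      have e2 : N * Δ ≤ N * (M * dpow) := mul_le_mul_of_nonneg_left hi hN0
      linarith [hy1.trans e1, hy2.trans e2]
    -- the z-difference
    set A := fderiv ℝ (fun y => θ t τ ξ y) η with hA
    set A' := fderiv ℝ (fun y => θ t τ' ξ y) η with hA'
    have hzA : ‖A - A'‖ ≤ N * dpow := by
      have h := F3 t ht ξ τ τ' hτ hτ' η
      rwa [habs] at h
    have hA'N : ‖A'‖ ≤ N := F1 t ht ξ τ' hτ' η
    have hσd : ‖σ τ η - σ τ' η‖ ≤ L * Δ := by
      have h := hσL τ τ' η η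
      rwa [sub_self, norm_zero, add_zero, habs] at h
    have hz : ‖A.comp (σ τ η) - A'.comp (σ τ' η)‖ ≤ N * dpow * L + N * (L * Δ) := by
      have hsplit : A.comp (σ τ η) - A'.comp (σ τ' η)
          = (A - A').comp (σ τ η) + A'.comp (σ τ η - σ τ' η) := by
        rw [ContinuousLinearMap.sub_comp, ContinuousLinearMap.comp_sub]; abel
      rw [hsplit]
      refine (norm_add_le _ _).trans (add_le_add ?_ ?_)
      · exact (ContinuousLinearMap.opNorm_comp_le _ _).trans
          (mul_le_mul hzA (hσB τ η) (norm_nonneg _) (mul_nonneg hN0 hd0))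
      · exact (ContinuousLinearMap.opNorm_comp_le _ _).trans
          (mul_le_mul hA'N hσd (norm_nonneg _) hN0)
    have hzz : ‖A.comp (σ τ η) - A'.comp (σ τ' η)‖ ≤ 2 * (L * N * (M * dpow)) := by
      refine hz.trans ?_
      have h1 : N * dpow * L ≤ L * N * (M * dpow) := by
        nlinarith [mul_nonneg (mul_nonneg hL.le hN0) hd0]
      have h2 : N * (L * Δ) ≤ L * N * (M * dpow) := by
        nlinarith [mul_le_mul_of_nonneg_left hi (mul_nonneg hN0 hL.le)]
      linarith
    -- conclude
    have hg1 := hgL t t τ τ' ξ ξ η η (θ τ τ η η) (θ τ' τ' η η)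
      (A.comp (σ τ η)) (A'.comp (σ τ' η))
    simp only [sub_self, abs_zero, norm_zero, add_zero, zero_add] at hg1
    rw [habs] at hg1
    have hGeq : Gg τ η - Gg τ' η
        = g t τ ξ η (θ τ τ η η) (A.comp (σ τ η))
          - g t τ' ξ η (θ τ' τ' η η) (A'.comp (σ τ' η)) := by
      rw [hGg, hA, hA']
    rw [hGeq]
    refine hg1.trans ?_
    have hsum : Δ + ‖θ τ τ η η - θ τ' τ' η η‖ + ‖A.comp (σ τ η) - A'.comp (σ τ' η)‖
        ≤ M * dpow + 2 * (N * (M * dpow)) + 2 * (L * N * (M * dpow)) := by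
      linarith [hi, hyd, hzz]
    calc L * (Δ + ‖θ τ τ η η - θ τ' τ' η η‖ + ‖A.comp (σ τ η) - A'.comp (σ τ' η)‖)
        ≤ L * (M * dpow + 2 * (N * (M * dpow)) + 2 * (L * N * (M * dpow))) :=
          mul_le_mul_of_nonneg_left hsum hL.le
      _ ≤ L * M * (3 + 2*L) * (1 + N) * dpow := by
          nlinarith [mul_nonneg (mul_nonneg hL.le hM0) hd0,
            mul_nonneg (mul_nonneg (mul_nonneg hL.le hM0) hd0) hN0,
            mul_nonneg (mul_nonneg (mul_nonneg hL.le hM0) hd0) hL.le]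
  -- key space-Hölder estimate
  have key2 : ∀ τ : ℝ, τ ∈ Icc (max t S) T → ∀ η η' : En n, η ≠ η' → dist η η' ≤ 1 →
      ‖Gg τ η - Gg τ η'‖ ≤ L * (3 + 2*L) * (1 + N) * (dist η η' ^ α) := by
    intro τ hτ η η' hne hd1
    have hSτ : S ≤ τ := le_trans (le_max_right t S) hτ.1
    have hτ0 : 0 ≤ τ := hS0.trans hSτ
    have hτ0T : τ ∈ Icc (0:ℝ) T := ⟨hτ0, hτ.2⟩
    have hτself : τ ∈ Icc (max τ S) T := ⟨max_le le_rfl hSτ, hτ.2⟩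
    set r : ℝ := dist η η' with hrdef
    have hr0 : 0 < r := dist_pos.2 hne
    have hrn : ‖η - η'‖ = r := by rw [hrdef, dist_eq_norm]
    have hp0 : 0 ≤ r ^ α := Real.rpow_nonneg hr0.le _
    have hrα : r ≤ r ^ α := by
      have h := holder_aux (c := α) (e := 1) hr0.le hd1 le_rfl hα1.le
        (by linarith) one_ne_zero
      simpa [Real.rpow_one] using h
    -- y-difference
    have hy1 : ‖θ τ τ η η - θ τ τ η η'‖ ≤ N * r := by
      have hm := mvt_space (f := fun y => θ τ τ η y)
        (fun y => (hmem τ hτ0T τ hτself η y).1)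
        (fun y => F1 τ hτ0T η τ hτself y) η' η
      rwa [hrn] at hm
    have hy2 : ‖θ τ τ η η' - θ τ τ η' η'‖ ≤ N * r := by
      have hm := mvt_space (f := fun ζ => θ τ τ ζ η')
        (fun ζ => (hmem τ hτ0T τ hτself ζ η').2.2.1)
        (fun ζ => F6 τ hτ0T ζ τ hτself η') η' η
      rwa [hrn] at hm
    have hyd : ‖θ τ τ η η - θ τ τ η' η'‖ ≤ 2 * (N * r) := by
      have h3 : θ τ τ η η - θ τ τ η' η'
          = (θ τ τ η η - θ τ τ η η') + (θ τ τ η η' - θ τ τ η' η') := by abel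
      rw [h3]
      refine (norm_add_le _ _).trans ?_
      linarith
    -- z-difference
    set A := fderiv ℝ (fun y => θ t τ ξ y) η with hA
    set A' := fderiv ℝ (fun y => θ t τ ξ y) η' with hA'
    have hzA : ‖A - A'‖ ≤ N * r ^ α := F4 t ht ξ τ hτ η η' hd1
    have hA'N : ‖A'‖ ≤ N := F1 t ht ξ τ hτ η'
    have hσd : ‖σ τ η - σ τ η'‖ ≤ L * r := by
      have h := hσL τ τ η η'
      rwa [sub_self, abs_zero, zero_add, hrn] at h
    have hz : ‖A.comp (σ τ η) - A'.comp (σ τ η')‖ ≤ N * r ^ α * L + N * (L * r) := by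
      have hsplit : A.comp (σ τ η) - A'.comp (σ τ η')
          = (A - A').comp (σ τ η) + A'.comp (σ τ η - σ τ η') := by
        rw [ContinuousLinearMap.sub_comp, ContinuousLinearMap.comp_sub]; abel
      rw [hsplit]
      refine (norm_add_le _ _).trans (add_le_add ?_ ?_)
      · exact (ContinuousLinearMap.opNorm_comp_le _ _).trans
          (mul_le_mul hzA (hσB τ η) (norm_nonneg _) (mul_nonneg hN0 hp0))
      · exact (ContinuousLinearMap.opNorm_comp_le _ _).trans
          (mul_le_mul hA'N hσd (norm_nonneg _) hN0)
    -- conclude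
    have hg1 := hgL t t τ τ ξ ξ η η' (θ τ τ η η) (θ τ τ η' η')
      (A.comp (σ τ η)) (A'.comp (σ τ η'))
    simp only [sub_self, abs_zero, norm_zero, add_zero, zero_add] at hg1
    rw [hrn] at hg1
    have hGeq : Gg τ η - Gg τ η'
        = g t τ ξ η (θ τ τ η η) (A.comp (σ τ η))
          - g t τ ξ η' (θ τ τ η' η') (A'.comp (σ τ η')) := by
      rw [hGg, hA, hA']
    rw [hGeq]
    refine hg1.trans ?_
    have hNr : N * r ≤ N * r ^ α := mul_le_mul_of_nonneg_left hrα hN0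
    have hsum : r + ‖θ τ τ η η - θ τ τ η' η'‖ + ‖A.comp (σ τ η) - A'.comp (σ τ η')‖
        ≤ r ^ α + 2 * (N * r ^ α) + (N * r ^ α * L + N * (L * r ^ α)) := by
      have h2 : N * (L * r) ≤ N * (L * r ^ α) := by
        have := mul_le_mul_of_nonneg_left hrα (mul_nonneg hN0 hL.le)
        nlinarith
      linarith [hyd, hz, hrα]
    calc L * (r + ‖θ τ τ η η - θ τ τ η' η'‖ + ‖A.comp (σ τ η) - A'.comp (σ τ η')‖)
        ≤ L * (r ^ α + 2 * (N * r ^ α) + (N * r ^ α * L + N * (L * r ^ α))) :=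
          mul_le_mul_of_nonneg_left hsum hL.le
      _ ≤ L * (3 + 2*L) * (1 + N) * r ^ α := by
          nlinarith [mul_nonneg hL.le hp0, mul_nonneg (mul_nonneg hL.le hp0) hN0,
            mul_nonneg (mul_nonneg hL.le hp0) hL.le]
  -- Hölder seminorm bounds
  have hB1 : hS (max t S) T (α/2) Gg
      ≤ ENNReal.ofReal (L * M * (3 + 2*L) * (1 + N)) := by
    refine iSup_le fun τ => iSup_le fun τ' => iSup_le fun η => ?_
    rcases eq_or_ne τ.1 τ'.1 with heq | hne
    · simp only [heq, sub_self, nnnorm_zero, ENNReal.coe_zero, ENNReal.zero_div]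
      exact zero_le
    · have hd : 0 < |τ.1 - τ'.1| ^ (α/2) :=
        Real.rpow_pos_of_pos (abs_pos.2 (sub_ne_zero.2 hne)) _
      refine quot_goal hd ?_
      rcases le_total τ.1 τ'.1 with h | h
      · exact key1 τ.1 τ'.1 τ.2 τ'.2 h η
      · rw [norm_sub_rev, abs_sub_comm]
        exact key1 τ'.1 τ.1 τ'.2 τ.2 h η
  have hB2 : hX (max t S) T α Gg
      ≤ ENNReal.ofReal (L * (3 + 2*L) * (1 + N)) := by
    refine iSup_le fun τ => iSup_le fun η => iSup_le fun η' => iSup_le fun hd1 => ?_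
    rcases eq_or_ne η η' with rfl | hne
    · simp only [sub_self, nnnorm_zero, ENNReal.coe_zero, ENNReal.zero_div]
      exact zero_le
    · have hd : 0 < dist η η' ^ α := Real.rpow_pos_of_pos (dist_pos.2 hne) _
      refine quot_goal hd ?_
      exact key2 τ.1 τ.2 η η' hne hd1
  -- assemble
  have hc1 : (0:ℝ) ≤ L * M * (3 + 2*L) * (1 + N) := by positivity
  have hc2 : (0:ℝ) ≤ L * (3 + 2*L) * (1 + N) := by positivity
  have hfin : nrmA (max t S) T α Gg
      ≤ ENNReal.ofReal L + (ENNReal.ofReal (L * M * (3 + 2*L) * (1 + N))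
          + ENNReal.ofReal (L * (3 + 2*L) * (1 + N))) :=
    add_le_add hB0 (add_le_add hB1 hB2)
  refine hfin.trans ?_
  rw [← ENNReal.ofReal_add hc1 hc2, ← ENNReal.ofReal_add hL.le (by linarith)]
  have hreal : L + (L * M * (3 + 2*L) * (1 + N) + L * (3 + 2*L) * (1 + N))
      ≤ (L + L * M * (3 + 2*L) + L * (3 + 2*L)) * (1 + N) := by
    nlinarith [mul_nonneg hL.le hN0]
  refine (ENNReal.ofReal_le_ofReal hreal).trans ?_
  rw [ENNReal.ofReal_mul (by positivity), ENNReal.ofReal_add zero_le_one hN0,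
    ENNReal.ofReal_one, hNdef, ENNReal.ofReal_toReal hN]
  exact le_rfl

end
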